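/- Hivert's operators π̃_i satisfy the braid relations π̃_i π̃_{i+1} π̃_i = π̃_{i+1} π̃_i π̃_{i+1} and the commutation relations π̃_i π̃_j = π̃_j π̃_i for |i−j| > 1. -/

import Mathlib

open MvPolynomial

/-- Hivert's quasisymmetric swap on exponent vectors: exchange the exponents in
positions `i` and `i+1` if one of them is zero, otherwise do nothing. -/
noncomputable def tswapE (n i : ℕ) (hi : i + 1 < n) (β : Fin n →₀ ℕ) : Fin n →₀ ℕ :=
  if β ⟨i, by omega⟩ = 0 ∨ β ⟨i + 1, hi⟩ = 0 then
    β.equivMapDomain (Equiv.swap (⟨i, by omega⟩ : Fin n) ⟨i + 1, hi⟩)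
  else β

/-- Hivert's quasisymmetric action `s̃ᵢ` on polynomials, acting monomial-wise by
`s̃ᵢ(x^β) = x^(s̃ᵢ β)` and extended linearly. -/
noncomputable def stilde (n i : ℕ) (hi : i + 1 < n) (f : MvPolynomial (Fin n) ℂ) :
    MvPolynomial (Fin n) ℂ :=
  f.support.sum fun β => monomial (tswapE n i hi β) (coeff β f)

/-- `PRel n i hi f g` encodes `π̃ᵢ f = g`, where
`π̃ᵢ f = (xᵢ f - s̃ᵢ(xᵢ f))/(xᵢ - xᵢ₊₁)`; the relation
`(xᵢ - xᵢ₊₁) * g = xᵢ f - s̃ᵢ(xᵢ f)` determines `g` uniquely. -/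
def PRel (n i : ℕ) (hi : i + 1 < n) (f g : MvPolynomial (Fin n) ℂ) : Prop :=
  (X ⟨i, by omega⟩ - X ⟨i + 1, hi⟩) * g
    = X ⟨i, by omega⟩ * f - stilde n i hi (X ⟨i, by omega⟩ * f)

section Aux
variable {n : ℕ}

noncomputable def opSum (h : (Fin n →₀ ℕ) → ℂ → MvPolynomial (Fin n) ℂ)
    (f : MvPolynomial (Fin n) ℂ) : MvPolynomial (Fin n) ℂ :=
  f.support.sum fun β => h β (coeff β f)

lemma opSum_subset (h : (Fin n →₀ ℕ) → ℂ → MvPolynomial (Fin n) ℂ)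
    (h0 : ∀ β, h β 0 = 0) (f : MvPolynomial (Fin n) ℂ) (s : Finset (Fin n →₀ ℕ))
    (hs : f.support ⊆ s) : opSum h f = s.sum fun β => h β (coeff β f) := by
  refine Finset.sum_subset hs fun β _ hβ => ?_
  rw [MvPolynomial.notMem_support_iff.mp hβ, h0]

lemma opSum_add (h : (Fin n →₀ ℕ) → ℂ → MvPolynomial (Fin n) ℂ)
    (h0 : ∀ β, h β 0 = 0)
    (hadd : ∀ β c d, h β (c + d) = h β c + h β d)
    (f g : MvPolynomial (Fin n) ℂ) : opSum h (f + g) = opSum h f + opSum h g := by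
  rw [opSum_subset h h0 f (f.support ∪ g.support) Finset.subset_union_left,
    opSum_subset h h0 g (f.support ∪ g.support) Finset.subset_union_right,
    opSum_subset h h0 (f + g) (f.support ∪ g.support) (MvPolynomial.support_add),
    ← Finset.sum_add_distrib]
  exact Finset.sum_congr rfl fun β _ => by rw [coeff_add, hadd]

lemma opSum_monomial (h : (Fin n →₀ ℕ) → ℂ → MvPolynomial (Fin n) ℂ)
    (h0 : ∀ β, h β 0 = 0) (β : Fin n →₀ ℕ) (c : ℂ) :
    opSum h (monomial β c) = h β c := by
  classical
  rcases eq_or_ne c 0 with rfl | hc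
  · rw [h0, opSum, map_zero]; simp
  · rw [opSum, support_monomial, if_neg hc, Finset.sum_singleton, coeff_monomial, if_pos rfl]

end Aux

section Ops
variable {n : ℕ}

noncomputable def swapE (u v : Fin n) (β : Fin n →₀ ℕ) : Fin n →₀ ℕ :=
  if β u = 0 ∨ β v = 0 then β.equivMapDomain (Equiv.swap u v) else β

noncomputable def sT (u v : Fin n) : MvPolynomial (Fin n) ℂ → MvPolynomial (Fin n) ℂ :=
  opSum fun β c => monomial (swapE u v β) c

lemma stilde_eq (i : ℕ) (hi : i + 1 < n) :
    stilde n i hi = sT (⟨i, by omega⟩ : Fin n) ⟨i + 1, hi⟩ := rfl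

noncomputable def fE (u v : Fin n) (β : Fin n →₀ ℕ) (k : ℕ) : Fin n →₀ ℕ :=
  (β.update u (β u - k)).update v k

noncomputable def piT (u v : Fin n) : MvPolynomial (Fin n) ℂ → MvPolynomial (Fin n) ℂ :=
  opSum fun β c =>
    if β v = 0 then ∑ k ∈ Finset.range (β u + 1), monomial (fE u v β k) c else 0

lemma fE_apply_snd (u v : Fin n) (β : Fin n →₀ ℕ) (k : ℕ) : fE u v β k v = k := by
  classical simp [fE, Finsupp.coe_update, Function.update_apply]

lemma fE_apply_fst (u v : Fin n) (huv : u ≠ v) (β : Fin n →₀ ℕ) (k : ℕ) :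
    fE u v β k u = β u - k := by
  classical simp [fE, Finsupp.coe_update, Function.update_apply, huv, (huv.symm : v ≠ u)]

lemma fE_apply_other (u v : Fin n) (β : Fin n →₀ ℕ) (k : ℕ) (x : Fin n)
    (hxu : x ≠ u) (hxv : x ≠ v) : fE u v β k x = β x := by
  classical simp [fE, Finsupp.coe_update, Function.update_apply, hxu, hxv]

lemma piT_add (u v : Fin n) (f g : MvPolynomial (Fin n) ℂ) :
    piT u v (f + g) = piT u v f + piT u v g := by
  refine opSum_add _ (fun β => ?_) (fun β c d => ?_) f g
  · split <;> simp
  · split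
    · rw [← Finset.sum_add_distrib]
      exact Finset.sum_congr rfl fun k _ => by rw [map_add]
    · simp

lemma piT_monomial (u v : Fin n) (β : Fin n →₀ ℕ) (c : ℂ) :
    piT u v (monomial β c) =
      if β v = 0 then ∑ k ∈ Finset.range (β u + 1), monomial (fE u v β k) c else 0 :=
  opSum_monomial _ (fun β => by split <;> simp) β c

lemma sT_add (u v : Fin n) (f g : MvPolynomial (Fin n) ℂ) :
    sT u v (f + g) = sT u v f + sT u v g :=
  opSum_add _ (fun β => by simp) (fun β c d => by rw [map_add]) f g

lemma sT_monomial (u v : Fin n) (β : Fin n →₀ ℕ) (c : ℂ) :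
    sT u v (monomial β c) = monomial (swapE u v β) c :=
  opSum_monomial _ (fun β => by simp) β c

lemma piT_sum {α : Type*} (u v : Fin n) (s : Finset α) (g : α → MvPolynomial (Fin n) ℂ) :
    piT u v (∑ a ∈ s, g a) = ∑ a ∈ s, piT u v (g a) := by
  classical
  induction s using Finset.induction with
  | empty => simp [piT, opSum]
  | insert _ _ ha ih =>
    rw [Finset.sum_insert ha, piT_add, ih, Finset.sum_insert ha]

end Ops

section Key
variable {n : ℕ}

lemma X_mul_monomial' (u : Fin n) (β : Fin n →₀ ℕ) (c : ℂ) :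
    X u * monomial β c = monomial (β + Finsupp.single u 1) c := by
  rw [X, monomial_mul, one_mul, add_comm]

lemma fE_eq_add (u v : Fin n) (huv : u ≠ v) (β : Fin n →₀ ℕ) (hv : β v = 0) (k : ℕ) :
    fE u v β k = β.update u 0 + Finsupp.single u (β u - k) + Finsupp.single v k := by
  classical
  ext x
  simp only [Finsupp.add_apply, Finsupp.coe_update, Function.update_apply,
    Finsupp.single_apply]
  by_cases hxu : x = u
  · rw [hxu, fE_apply_fst u v huv β k]
    simp [Ne.symm huv]
  · by_cases hxv : x = v
    · rw [hxv, fE_apply_snd]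
      simp_all [Ne.symm hxu]
    · rw [fE_apply_other u v β k x hxu hxv]
      simp [hxu, Ne.symm hxu, Ne.symm hxv]

lemma beta_decomp (u : Fin n) (β : Fin n →₀ ℕ) (m : ℕ) :
    β + Finsupp.single u m = β.update u 0 + Finsupp.single u (β u + m) := by
  classical
  ext x
  simp only [Finsupp.add_apply, Finsupp.coe_update, Function.update_apply,
    Finsupp.single_apply]
  by_cases hxu : x = u
  · simp [hxu]
  · simp [hxu, Ne.symm hxu]

lemma swapE_shift (u v : Fin n) (huv : u ≠ v) (γ : Fin n →₀ ℕ) (hu : γ u = 0) (hv : γ v = 0)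
    (m : ℕ) : swapE u v (γ + Finsupp.single u m) = γ + Finsupp.single v m := by
  classical
  have hval : (γ + Finsupp.single u m : Fin n →₀ ℕ) v = 0 := by
    simp [Finsupp.single_apply, huv, hv]
  rw [swapE, if_pos (Or.inr hval)]
  ext x
  rw [Finsupp.equivMapDomain_apply, Equiv.symm_swap]
  by_cases hxu : x = u
  · rw [hxu, Equiv.swap_apply_left]
    simp [Finsupp.single_apply, hu, hv, huv, Ne.symm huv]
  · by_cases hxv : x = v
    · rw [hxv, Equiv.swap_apply_right]
      simp [Finsupp.single_apply, hu, hv]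
    · rw [Equiv.swap_apply_of_ne_of_ne hxu hxv]
      simp [Finsupp.single_apply, Ne.symm hxu, Ne.symm hxv]

lemma key_identity (u v : Fin n) (huv : u ≠ v) (f : MvPolynomial (Fin n) ℂ) :
    (X u - X v) * piT u v f = X u * f - sT u v (X u * f) := by
  induction f using MvPolynomial.induction_on' with
  | add p q hp hq =>
    simp only [mul_add, piT_add, sT_add, hp, hq]; ring
  | monomial β c =>
    classical
    rw [X_mul_monomial', sT_monomial, piT_monomial]
    by_cases hv : β v = 0
    · rw [if_pos hv]
      set γ := β.update u 0 with hγ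
      have hγu : γ u = 0 := by
        simp [hγ, Finsupp.coe_update, Function.update_apply]
      have hγv : γ v = 0 := by
        simp [hγ, Finsupp.coe_update, Function.update_apply, Ne.symm huv, hv]
      rw [beta_decomp u β 1, ← hγ, swapE_shift u v huv γ hγu hγv]
      have hmono : ∀ k, monomial (fE u v β k) c
          = X v ^ k * X u ^ (β u - k) * monomial γ c := by
        intro k
        rw [fE_eq_add u v huv β hv k, ← hγ,
          show γ + Finsupp.single u (β u - k) + Finsupp.single v k
            = Finsupp.single v k + (Finsupp.single u (β u - k) + γ) by abel,
          monomial_single_add, monomial_single_add, mul_assoc]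
      have hsum : ∑ k ∈ Finset.range (β u + 1), monomial (fE u v β k) c
          = (∑ k ∈ Finset.range (β u + 1), X v ^ k * X u ^ (β u - k)) * monomial γ c := by
        rw [Finset.sum_mul]; exact Finset.sum_congr rfl fun k _ => hmono k
      have hm2 : monomial (γ + Finsupp.single u (β u + 1)) c
          = X u ^ (β u + 1) * monomial γ c := by
        rw [add_comm γ, monomial_single_add]
      have hm3 : monomial (γ + Finsupp.single v (β u + 1)) c
          = X v ^ (β u + 1) * monomial γ c := by
        rw [add_comm γ, monomial_single_add]
      rw [hsum, hm2, hm3]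
      have hg := geom_sum₂_mul (X v : MvPolynomial (Fin n) ℂ) (X u) (β u + 1)
      simp only [Nat.add_sub_cancel] at hg
      linear_combination (-(monomial γ c)) * hg
    · rw [if_neg hv, swapE, if_neg, mul_zero, sub_self]
      push_neg
      constructor
      · simp [Finsupp.single_apply]
      · simpa [Finsupp.single_apply, huv] using hv

end Key

section Uniq
variable {n : ℕ}

lemma piT_zero (u v : Fin n) : piT u v 0 = 0 := by
  simp [piT, opSum]

lemma PRel_iff (i : ℕ) (hi : i + 1 < n) (f g : MvPolynomial (Fin n) ℂ) :
    PRel n i hi f g ↔ g = piT (⟨i, by omega⟩ : Fin n) ⟨i + 1, hi⟩ f := by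
  have huv : (⟨i, by omega⟩ : Fin n) ≠ ⟨i + 1, hi⟩ := by simp [Fin.ext_iff]
  have hne : (X (⟨i, by omega⟩ : Fin n) - X ⟨i + 1, hi⟩ : MvPolynomial (Fin n) ℂ) ≠ 0 :=
    sub_ne_zero.mpr fun h => huv (MvPolynomial.X_injective h)
  unfold PRel
  rw [stilde_eq, ← key_identity _ _ huv f]
  exact ⟨fun h => mul_left_cancel₀ hne h, fun h => by rw [h]⟩

end Uniq

section Comm
variable {n : ℕ}

lemma fE_fE_comm (u v u' v' : Fin n) (huv : u ≠ v) (h2 : u' ≠ v') (h3 : u ≠ u')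
    (h4 : u ≠ v') (h5 : v ≠ u') (h6 : v ≠ v') (β : Fin n →₀ ℕ) (k m : ℕ) :
    fE u v (fE u' v' β m) k = fE u' v' (fE u v β k) m := by
  ext x
  by_cases xu : x = u
  · rw [xu, fE_apply_fst u v huv (fE u' v' β m) k, fE_apply_other u' v' β m u h3 h4,
      fE_apply_other u' v' (fE u v β k) m u h3 h4, fE_apply_fst u v huv β k]
  by_cases xv : x = v
  · rw [xv, fE_apply_snd u v (fE u' v' β m) k,
      fE_apply_other u' v' (fE u v β k) m v h5 h6, fE_apply_snd u v β k]
  by_cases xu' : x = u'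
  · rw [xu', fE_apply_other u v (fE u' v' β m) k u' (Ne.symm h3) (Ne.symm h5),
      fE_apply_fst u' v' h2 β m, fE_apply_fst u' v' h2 (fE u v β k) m,
      fE_apply_other u v β k u' (Ne.symm h3) (Ne.symm h5)]
  by_cases xv' : x = v'
  · rw [xv', fE_apply_other u v (fE u' v' β m) k v' (Ne.symm h4) (Ne.symm h6),
      fE_apply_snd u' v' β m, fE_apply_snd u' v' (fE u v β k) m]
  · rw [fE_apply_other u v (fE u' v' β m) k x xu xv, fE_apply_other u' v' β m x xu' xv',
      fE_apply_other u' v' (fE u v β k) m x xu' xv', fE_apply_other u v β k x xu xv]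

lemma piT_piT_comm (u v u' v' : Fin n) (huv : u ≠ v) (h2 : u' ≠ v') (h3 : u ≠ u')
    (h4 : u ≠ v') (h5 : v ≠ u') (h6 : v ≠ v') (f : MvPolynomial (Fin n) ℂ) :
    piT u v (piT u' v' f) = piT u' v' (piT u v f) := by
  induction f using MvPolynomial.induction_on' with
  | add p q hp hq => simp only [piT_add, hp, hq]
  | monomial β c =>
    rw [piT_monomial u v, piT_monomial u' v']
    by_cases hv' : β v' = 0
    · by_cases hv : β v = 0
      · rw [if_pos hv', if_pos hv, piT_sum, piT_sum]
        have e1 : ∀ m, piT u v (monomial (fE u' v' β m) c)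
            = ∑ k ∈ Finset.range (β u + 1), monomial (fE u v (fE u' v' β m) k) c := by
          intro m
          rw [piT_monomial, fE_apply_other u' v' β m v h5 h6, if_pos hv,
            fE_apply_other u' v' β m u h3 h4]
        have e2 : ∀ k, piT u' v' (monomial (fE u v β k) c)
            = ∑ m ∈ Finset.range (β u' + 1), monomial (fE u' v' (fE u v β k) m) c := by
          intro k
          rw [piT_monomial, fE_apply_other u v β k v' (Ne.symm h4) (Ne.symm h6), if_pos hv',
            fE_apply_other u v β k u' (Ne.symm h3) (Ne.symm h5)]
        simp only [e1, e2]
        rw [Finset.sum_comm]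
        refine Finset.sum_congr rfl fun k _ => Finset.sum_congr rfl fun m _ => ?_
        rw [fE_fE_comm u v u' v' huv h2 h3 h4 h5 h6 β k m]
      · rw [if_pos hv', if_neg hv, piT_zero, piT_sum]
        refine Finset.sum_eq_zero fun m _ => ?_
        rw [piT_monomial, fE_apply_other u' v' β m v h5 h6, if_neg hv]
    · by_cases hv : β v = 0
      · rw [if_neg hv', if_pos hv, piT_zero, piT_sum]
        refine (Finset.sum_eq_zero fun k _ => ?_).symm
        rw [piT_monomial, fE_apply_other u v β k v' (Ne.symm h4) (Ne.symm h6), if_neg hv']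
      · rw [if_neg hv', if_neg hv, piT_zero, piT_zero]

end Comm

section Braid
variable {n : ℕ}

lemma braid_exp (u v w : Fin n) (huv : u ≠ v) (hvw : v ≠ w) (huw : u ≠ w)
    (β : Fin n →₀ ℕ) (k l : ℕ) :
    fE u v (fE v w (fE u v β k) k) l = fE v w (fE u v β (k + l)) k := by
  ext x
  by_cases xu : x = u
  · rw [xu, fE_apply_fst u v huv (fE v w (fE u v β k) k) l,
      fE_apply_other v w (fE u v β k) k u huv huw, fE_apply_fst u v huv β k,
      fE_apply_other v w (fE u v β (k + l)) k u huv huw, fE_apply_fst u v huv β (k + l),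
      Nat.sub_sub]
  by_cases xv : x = v
  · rw [xv, fE_apply_snd u v (fE v w (fE u v β k) k) l,
      fE_apply_fst v w hvw (fE u v β (k + l)) k, fE_apply_snd u v β (k + l)]
    omega
  by_cases xw : x = w
  · rw [xw, fE_apply_other u v (fE v w (fE u v β k) k) l w (Ne.symm huw) (Ne.symm hvw),
      fE_apply_snd v w (fE u v β k) k, fE_apply_snd v w (fE u v β (k + l)) k]
  · rw [fE_apply_other u v (fE v w (fE u v β k) k) l x xu xv,
      fE_apply_other v w (fE u v β k) k x xv xw, fE_apply_other u v β k x xu xv,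
      fE_apply_other v w (fE u v β (k + l)) k x xv xw,
      fE_apply_other u v β (k + l) x xu xv]

lemma piT_braid (u v w : Fin n) (huv : u ≠ v) (hvw : v ≠ w) (huw : u ≠ w)
    (f : MvPolynomial (Fin n) ℂ) :
    piT u v (piT v w (piT u v f)) = piT v w (piT u v (piT v w f)) := by
  induction f using MvPolynomial.induction_on' with
  | add p q hp hq => simp only [piT_add, hp, hq]
  | monomial β c =>
    by_cases hb : β v = 0
    · by_cases hr : β w = 0
      · -- main case ----------------------------------------------------------
        -- LHS
        rw [piT_monomial u v β c, if_pos hb, piT_sum]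
        have e2 : ∀ k, piT v w (monomial (fE u v β k) c)
            = ∑ m ∈ Finset.range (k + 1), monomial (fE v w (fE u v β k) m) c := by
          intro k
          rw [piT_monomial, fE_apply_other u v β k w (Ne.symm huw) (Ne.symm hvw), if_pos hr,
            fE_apply_snd u v β k]
        simp only [e2, piT_sum]
        have e3 : ∀ k, (∑ m ∈ Finset.range (k + 1),
              piT u v (monomial (fE v w (fE u v β k) m) c))
            = ∑ l ∈ Finset.range (β u - k + 1),
                monomial (fE u v (fE v w (fE u v β k) k) l) c := by
          intro k
          rw [Finset.sum_eq_single_of_mem k (Finset.self_mem_range_succ k)]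
          · rw [piT_monomial, fE_apply_fst v w hvw (fE u v β k) k, fE_apply_snd u v β k,
              Nat.sub_self, if_pos rfl, fE_apply_other v w (fE u v β k) k u huv huw,
              fE_apply_fst u v huv β k]
          · intro m hm hmk
            rw [Finset.mem_range] at hm
            rw [piT_monomial, fE_apply_fst v w hvw (fE u v β k) m, fE_apply_snd u v β k,
              if_neg (by omega : ¬(k - m = 0))]
        simp only [e3]
        -- RHS
        have h0 : fE v w β 0 = β := by
          ext x
          by_cases xv : x = v
          · rw [xv, fE_apply_fst v w hvw β 0]; omega
          by_cases xw : x = w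
          · rw [xw, fE_apply_snd v w β 0, hr]
          · rw [fE_apply_other v w β 0 x xv xw]
        rw [piT_monomial v w β c, if_pos hr, hb, zero_add, Finset.sum_range_one, h0,
          piT_monomial u v β c, if_pos hb, piT_sum]
        simp only [e2]
        -- now: ∑ k ∈ range (β u + 1), ∑ l ∈ range (β u - k + 1), monomial (δ k l) c
        --    = ∑ l ∈ range (β u + 1), ∑ m ∈ range (l + 1), monomial (ε l m) c
        rw [Finset.sum_sigma', Finset.sum_sigma']
        refine Finset.sum_bij' (fun p _ => ⟨p.1 + p.2, p.1⟩) (fun p _ => ⟨p.2, p.1 - p.2⟩)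
          ?_ ?_ ?_ ?_ ?_
        · rintro ⟨k, l⟩ hp
          simp only [Finset.mem_sigma, Finset.mem_range] at hp ⊢
          omega
        · rintro ⟨l, m⟩ hp
          simp only [Finset.mem_sigma, Finset.mem_range] at hp ⊢
          omega
        · rintro ⟨k, l⟩ hp
          simp only [Finset.mem_sigma, Finset.mem_range] at hp
          simp only [Sigma.mk.inj_iff, heq_eq_eq]
          constructor <;> first | trivial | omega
        · rintro ⟨l, m⟩ hp
          simp only [Finset.mem_sigma, Finset.mem_range] at hp
          simp only [Sigma.mk.inj_iff, heq_eq_eq]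
          constructor <;> first | trivial | omega
        · rintro ⟨k, l⟩ hp
          simp only
          rw [braid_exp u v w huv hvw huw β k l]
      · -- hb, ¬hr : everything dies at the w-step -----------------------------
        rw [piT_monomial v w β c, if_neg hr, piT_zero, piT_zero,
          piT_monomial u v β c, if_pos hb, piT_sum]
        have e2 : ∀ k, piT v w (monomial (fE u v β k) c) = 0 := by
          intro k
          rw [piT_monomial, fE_apply_other u v β k w (Ne.symm huw) (Ne.symm hvw), if_neg hr]
        simp only [e2, Finset.sum_const_zero, piT_zero]
    · -- ¬hb ------------------------------------------------------------------
      rw [piT_monomial u v β c, if_neg hb, piT_zero, piT_zero, piT_monomial v w β c]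
      by_cases hr : β w = 0
      · rw [if_pos hr, piT_sum]
        have e1 : ∀ m, piT v w (piT u v (monomial (fE v w β m) c)) = 0 := by
          intro m
          rw [piT_monomial, fE_apply_fst v w hvw β m]
          by_cases hm : β v - m = 0
          · rw [if_pos hm, piT_sum]
            refine Finset.sum_eq_zero fun l _ => ?_
            rw [piT_monomial, fE_apply_other u v (fE v w β m) l w (Ne.symm huw) (Ne.symm hvw),
              fE_apply_snd v w β m, if_neg (by omega)]
          · rw [if_neg hm, piT_zero]
        rw [piT_sum]
        exact (Finset.sum_eq_zero fun m _ => e1 m).symm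
      · rw [if_neg hr, piT_zero, piT_zero]

end Braid


/-- Hivert's operators `π̃ᵢ` satisfy the braid relations
`π̃ᵢ π̃ᵢ₊₁ π̃ᵢ = π̃ᵢ₊₁ π̃ᵢ π̃ᵢ₊₁` and the commutation relations
`π̃ᵢ π̃ⱼ = π̃ⱼ π̃ᵢ` for `|i − j| > 1`. -/
theorem ptilde_braid_and_commute (n : ℕ) :
    (∀ (i : ℕ) (hi : i + 2 < n) (f a b c a' b' c' : MvPolynomial (Fin n) ℂ),
      PRel n i (by omega) f a → PRel n (i + 1) hi a b → PRel n i (by omega) b c →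
      PRel n (i + 1) hi f a' → PRel n i (by omega) a' b' → PRel n (i + 1) hi b' c' →
      c = c') ∧
    (∀ (i j : ℕ) (hi : i + 1 < n) (hj : j + 1 < n), (i + 1 < j ∨ j + 1 < i) →
      ∀ f a b a' b' : MvPolynomial (Fin n) ℂ,
      PRel n i hi f a → PRel n j hj a b →
      PRel n j hj f a' → PRel n i hi a' b' →
      b = b') := by
  constructor
  · intro i hi f a b c a' b' c' h1 h2 h3 h4 h5 h6
    rw [PRel_iff] at h1 h2 h3 h4 h5 h6
    subst h1 h2 h3 h4 h5 h6
    exact piT_braid _ _ _ (by simp only [ne_eq, Fin.mk.injEq]; omega)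
      (by simp only [ne_eq, Fin.mk.injEq]; omega) (by simp only [ne_eq, Fin.mk.injEq]; omega) f
  · intro i j hi hj hij f a b a' b' h1 h2 h3 h4
    rw [PRel_iff] at h1 h2 h3 h4
    subst h1 h2 h3 h4
    exact piT_piT_comm _ _ _ _ (by simp only [ne_eq, Fin.mk.injEq]; omega)
      (by simp only [ne_eq, Fin.mk.injEq]; omega) (by simp only [ne_eq, Fin.mk.injEq]; omega)
      (by simp only [ne_eq, Fin.mk.injEq]; omega) (by simp only [ne_eq, Fin.mk.injEq]; omega)
      (by simp only [ne_eq, Fin.mk.injEq]; omega) f
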